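/- Let κ be an uncountable regular cardinal, let δ be an ordinal with δ < κ, and let ι : κ → (δ → 2) be an injection. Define the colouring c on 2-element subsets of κ by setting, for α < β < κ, c({α,β}) = 0 if ι(α)(Δ(ι(α),ι(β))) < ι(β)(Δ(ι(α),ι(β))), and c({α,β}) = 1 otherwise, where Δ(x,y) denotes the least γ < δ with x(γ) ≠ y(γ). Then no c-homogeneous subset of κ is unbounded in κ. -/

import Mathlib

/-- `Δ(x,y)`: the least `γ < δ` at which the functions `x, y : δ → 2`
differ. -/
noncomputable def leastDiff (δ : Ordinal) (x y : Ordinal → Fin 2) : Ordinal :=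
  sInf {γ : Ordinal | γ < δ ∧ x γ ≠ y γ}

open Ordinal Set

def lexLT (δ : Ordinal) (a b : Ordinal → Fin 2) : Prop :=
  ∃ γ, γ < δ ∧ a γ < b γ ∧ ∀ γ' < γ, a γ' = b γ'

lemma fin2_lt (a b : Fin 2) : a < b ↔ (a = 0 ∧ b = 1) := by revert a b; decide

lemma lexLT_asymm {δ : Ordinal} {a b : Ordinal → Fin 2}
    (h1 : lexLT δ a b) (h2 : lexLT δ b a) : False := by
  obtain ⟨γ₁, _, hlt₁, heq₁⟩ := h1
  obtain ⟨γ₂, _, hlt₂, heq₂⟩ := h2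
  rcases lt_trichotomy γ₁ γ₂ with h | h | h
  · exact absurd ((heq₂ _ h) ▸ hlt₁) (lt_irrefl _)
  · subst h; exact absurd (hlt₁.trans hlt₂) (lt_irrefl _)
  · exact absurd ((heq₁ _ h) ▸ hlt₂) (lt_irrefl _)

lemma exists_enum (κ : Cardinal) (S : Set Ordinal) (hSsub : S ⊆ Set.Iio κ.ord)
    (hS : ∀ b < κ.ord, ∃ a ∈ S, b ≤ a) (hκ : Cardinal.aleph0 ≤ κ) (hcof : κ.ord.cof = κ) :
    ∃ e : Ordinal → Ordinal, StrictMono e ∧ ∀ i < κ.ord, e i ∈ S ∧ e i < κ.ord := by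
  set s := S ∪ Set.Ici κ.ord with hs
  have hub : ¬ BddAbove s := by
    rintro ⟨b, hb⟩
    have : max (b + 1) κ.ord ∈ s := Or.inr (Set.mem_Ici.2 (le_max_right _ _))
    have := hb this
    have : b + 1 ≤ b := le_trans (le_max_left _ _) this
    exact absurd this (by simp)
  refine ⟨enumOrd s, enumOrd_strictMono hub, ?_⟩
  have key : ∀ i < κ.ord, enumOrd s i < κ.ord := by
    intro i
    induction i using Ordinal.induction with
    | h i IH =>
      intro hi
      have hbd : Ordinal.bsup i (fun j hj => enumOrd s j + 1) < κ.ord := by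
        apply Ordinal.bsup_lt_ord (by rwa [hcof, ← Cardinal.lt_ord])
        intro j hj
        rw [Ordinal.add_one_eq_succ]
        exact (Cardinal.isSuccLimit_ord hκ).succ_lt (IH j hj (hj.trans hi))
      obtain ⟨a, haS, hab⟩ := hS _ hbd
      have : enumOrd s i ≤ a := by
        apply enumOrd_le_of_forall_lt (Or.inl haS)
        intro j hj
        calc enumOrd s j < enumOrd s j + 1 := lt_add_one _
          _ ≤ Ordinal.bsup i _ := Ordinal.le_bsup _ j hj
          _ ≤ a := hab
      exact lt_of_le_of_lt this (hSsub haS)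
  intro i hi
  have h1 := key i hi
  have h2 := enumOrd_mem hub i
  rcases h2 with h2 | h2
  · exact ⟨h2, h1⟩
  · exact absurd h1 (not_lt.2 h2)

lemma noChain (κ : Cardinal) (hreg : κ.IsRegular) :
    ∀ δ : Ordinal, δ < κ.ord → ∀ x : Ordinal → Ordinal → Fin 2,
      (∀ i < κ.ord, ∀ j < κ.ord, i < j → lexLT δ (x i) (x j)) → False := by
  intro δ
  induction δ using Ordinal.induction with
  | h δ IH =>
    intro hδ x hmono
    have hκ : Cardinal.aleph0 ≤ κ := hreg.aleph0_le
    have hlim := Cardinal.isSuccLimit_ord hκ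
    have hcof : κ.ord.cof = κ := hreg.cof_eq
    -- successor witnesses
    have key : ∀ i, i < κ.ord → ∃ γ, γ < δ ∧ x i γ = 0 ∧ x (i+1) γ = 1 ∧
        ∀ γ' < γ, x i γ' = x (i+1) γ' := by
      intro i hi
      have hi1 : i + 1 < κ.ord := by rw [Ordinal.add_one_eq_succ]; exact hlim.succ_lt hi
      obtain ⟨γ, hγδ, hlt, heq⟩ := hmono i hi (i+1) hi1 (lt_add_one i)
      obtain ⟨h0, h1⟩ := (fin2_lt _ _).1 hlt
      exact ⟨γ, hγδ, h0, h1, heq⟩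
    classical
    set g : Ordinal → Ordinal := fun i => if h : i < κ.ord then (key i h).choose else 0 with hgdef
    have hg : ∀ i (h : i < κ.ord), g i < δ ∧ x i (g i) = 0 ∧ x (i+1) (g i) = 1 ∧
        ∀ γ' < g i, x i γ' = x (i+1) γ' := by
      intro i h
      simp only [hgdef, dif_pos h]
      exact (key i h).choose_spec
    -- pigeonhole: find γ₀ with unbounded fiber
    have pig : ∃ γ₀, γ₀ < δ ∧ ∀ b < κ.ord, ∃ i, (i < κ.ord ∧ g i = γ₀) ∧ b ≤ i := by
      by_contra hcon
      push_neg at hcon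
      have hB : ∀ γ, γ < δ → ∃ b, b < κ.ord ∧ ∀ i, i < κ.ord → g i = γ → i < b := by
        intro γ hγ
        obtain ⟨b, hbκ, hb⟩ := hcon γ hγ
        exact ⟨b, hbκ, fun i hi hgi => hb i ⟨hi, hgi⟩⟩
      have hbd : Ordinal.bsup δ (fun γ hγ => (hB γ hγ).choose) < κ.ord := by
        apply Ordinal.bsup_lt_ord (by rwa [hcof, ← Cardinal.lt_ord])
        intro γ hγ; exact (hB γ hγ).choose_spec.1
      set i := Ordinal.bsup δ (fun γ hγ => (hB γ hγ).choose) with hidef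
      have hgi := hg i hbd
      have : i < (hB (g i) hgi.1).choose := (hB (g i) hgi.1).choose_spec.2 i hbd rfl
      exact absurd (lt_of_lt_of_le this (Ordinal.le_bsup _ _ hgi.1)) (lt_irrefl i)
    obtain ⟨γ₀, hγ₀δ, hT⟩ := pig
    obtain ⟨e, he, heT⟩ := exists_enum κ {i | i < κ.ord ∧ g i = γ₀} (fun i hi => hi.1)
      (fun b hb => hT b hb) hκ hcof
    apply IH γ₀ hγ₀δ (hγ₀δ.trans hδ) (fun j => x (e j))
    intro i hi j hj hij
    obtain ⟨⟨haκ, hga⟩, haκ'⟩ := heT i hi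
    obtain ⟨⟨hbκ, hgb⟩, hbκ'⟩ := heT j hj
    set a := e i; set b := e j
    have hab : a < b := he hij
    have sa := hg a haκ
    have sb := hg b hbκ
    rw [hga] at sa
    rw [hgb] at sb
    obtain ⟨γ₁, hγ₁δ, hlt, heq⟩ := hmono a haκ b hbκ hab
    have hγ₁ : γ₁ < γ₀ := by
      by_contra hcon
      push_neg at hcon
      rcases eq_or_lt_of_le hcon with hEq | hLt
      · -- γ₀ = γ₁
        rw [← hEq] at hlt
        rw [sa.2.1, sb.2.1] at hlt
        exact absurd hlt (lt_irrefl _)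
      · -- γ₀ < γ₁ : x a, x b agree at γ₀ and below
        have hagree : ∀ γ' < γ₀, x b γ' = x (a+1) γ' := by
          intro γ' hγ'
          rw [← heq γ' (hγ'.trans hLt), sa.2.2.2 γ' hγ']
        have h2 : lexLT δ (x b) (x (a+1)) := by
          refine ⟨γ₀, hγ₀δ, ?_, hagree⟩
          rw [sb.2.1, sa.2.2.1]
          decide
        have hsucc : a + 1 ≤ b := by
          rw [Ordinal.add_one_eq_succ]; exact Order.succ_le_of_lt hab
        rcases eq_or_lt_of_le hsucc with hEq2 | hLt2
        · have h1 := sa.2.2.1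
          rw [hEq2, sb.2.1] at h1
          exact absurd h1 (by decide)
        · exact lexLT_asymm (hmono (a+1) (hLt2.trans hbκ) b hbκ hLt2) h2
    exact ⟨γ₁, hγ₁, hlt, heq⟩

def flip2 : Fin 2 → Fin 2 := fun a => if a = 0 then 1 else 0


/-- Let `κ` be an uncountable regular cardinal, let `δ < κ` be an
ordinal, and let `ι : κ → (δ → 2)` be an injection.  Define the colouring `c`
on `2`-element subsets of `κ` by `c({α,β}) = 0` if
`ι(α)(Δ(ι(α),ι(β))) < ι(β)(Δ(ι(α),ι(β)))` and `c({α,β}) = 1` otherwise, for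
`α < β < κ`.  Then no `c`-homogeneous subset of `κ` is unbounded in `κ`.

Here ordinals below `κ.ord` represent elements of `κ`, functions `δ → 2` are
represented by functions `Ordinal → Fin 2` (only values below `δ` matter, and
injectivity is injectivity of the restrictions to `δ`). -/
theorem stmt3 (κ : Cardinal) (hreg : κ.IsRegular) (hunc : Cardinal.aleph0 < κ)
    (δ : Ordinal) (hδ : δ < κ.ord)
    (ι : Ordinal → Ordinal → Fin 2)
    (hinj : ∀ α < κ.ord, ∀ β < κ.ord, α ≠ β → ∃ γ < δ, ι α γ ≠ ι β γ)
    (c : Finset Ordinal → Fin 2)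
    (hc : ∀ α β : Ordinal, α < β → β < κ.ord →
      c {α, β} = if ι α (leastDiff δ (ι α) (ι β)) < ι β (leastDiff δ (ι α) (ι β))
        then 0 else 1)
    (H : Set Ordinal) (hH : H ⊆ Set.Iio κ.ord)
    (hhom : ∃ i : Fin 2, ∀ α ∈ H, ∀ β ∈ H, α < β → c {α, β} = i) :
    ¬ (∀ γ < κ.ord, ∃ α ∈ H, γ ≤ α) := by
  intro hub
  obtain ⟨i, hhomi⟩ := hhom
  -- key analysis of a pair in H
  have pair : ∀ a ∈ H, ∀ b ∈ H, a < b →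
      ∃ D, D < δ ∧ ι a D ≠ ι b D ∧ (∀ γ' < D, ι a γ' = ι b γ') ∧
        c {a, b} = (if ι a D < ι b D then 0 else 1) := by
    intro a ha b hb hab
    have haκ := hH ha
    have hbκ := hH hb
    have hne : ({γ : Ordinal | γ < δ ∧ ι a γ ≠ ι b γ}).Nonempty := by
      obtain ⟨γ, hγ, hne⟩ := hinj a haκ b hbκ (ne_of_lt hab)
      exact ⟨γ, hγ, hne⟩
    have hmem := csInf_mem hne
    refine ⟨leastDiff δ (ι a) (ι b), hmem.1, hmem.2, ?_, hc a b hab hbκ⟩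
    intro γ' hγ'
    by_contra hcon
    have : leastDiff δ (ι a) (ι b) ≤ γ' :=
      csInf_le (OrderBot.bddBelow _) ⟨hγ'.trans hmem.1, hcon⟩
    exact absurd hγ' (not_lt.2 this)
  have hκ : Cardinal.aleph0 ≤ κ := hreg.aleph0_le
  obtain ⟨e, he, heH⟩ := exists_enum κ H hH hub hκ hreg.cof_eq
  fin_cases i
  · -- colour 0 : ι increasing in lex
    apply noChain κ hreg δ hδ (fun j => ι (e j))
    intro p hp q hq hpq
    obtain ⟨haH, haκ⟩ := heH p hp
    obtain ⟨hbH, hbκ⟩ := heH q hq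
    have hab : e p < e q := he hpq
    obtain ⟨D, hDδ, hDne, hDeq, hcD⟩ := pair _ haH _ hbH hab
    have hc0 := hhomi _ haH _ hbH hab
    rw [hcD] at hc0
    by_cases hlt : ι (e p) D < ι (e q) D
    · exact ⟨D, hDδ, hlt, hDeq⟩
    · rw [if_neg hlt] at hc0
      exact absurd hc0 (by decide)
  · -- colour 1 : flipped family increasing
    apply noChain κ hreg δ hδ (fun j γ => flip2 (ι (e j) γ))
    intro p hp q hq hpq
    obtain ⟨haH, haκ⟩ := heH p hp
    obtain ⟨hbH, hbκ⟩ := heH q hq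
    have hab : e p < e q := he hpq
    obtain ⟨D, hDδ, hDne, hDeq, hcD⟩ := pair _ haH _ hbH hab
    have hc1 := hhomi _ haH _ hbH hab
    rw [hcD] at hc1
    by_cases hlt : ι (e p) D < ι (e q) D
    · rw [if_pos hlt] at hc1
      exact absurd hc1 (by decide)
    · have hgt : ι (e q) D < ι (e p) D := lt_of_le_of_ne (not_lt.1 hlt) (Ne.symm hDne)
      obtain ⟨h0, h1⟩ := (fin2_lt _ _).1 hgt
      refine ⟨D, hDδ, ?_, fun γ' hγ' => by simp only []; rw [hDeq γ' hγ']⟩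
      show flip2 (ι (e p) D) < flip2 (ι (e q) D)
      rw [h0, h1]
      decide
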